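/- Let P be a finite pure poset and τ an order ideal of P. Then the only lattice points of the convex hull (in ℝ^P) of the finite set δ(E ∖ E(τ)) = {δ(e) : e ∈ E, e ∉ E(τ)} are the points δ(e) themselves; that is, conv(δ(E ∖ E(τ))) ∩ ℤ^P = δ(E ∖ E(τ)). (This is the combinatorial form of the terminality of the singularities of the Hibi toric variety ℙ_{Δ(P)}.) -/

import Mathlib

/-- The bounded poset `P̂ = 0̂ ⊕ P ⊕ 1̂`. -/
abbrev Phat (P : Type*) := WithBot (WithTop P)

/-- The inclusion `P → P̂`. -/
def toHat {P : Type*} (u : P) : Phat P := ((u : WithTop P) : Phat P)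

/-- `χ_w ∈ ℝ^P` for `w ∈ P̂`: the standard basis vector for `w ∈ P`, and `0` for `0̂, 1̂`. -/
def chiHatR {P : Type*} [DecidableEq P] : Phat P → (P → ℝ) :=
  WithBot.recBotCoe 0 (WithTop.recTopCoe 0 (fun v => Pi.single v 1))

/-- `δ(e) = χ_{t(e)} − χ_{s(e)} ∈ ℝ^P` for an edge `e = (t(e), s(e))` of `P̂`. -/
def deltaVecR {P : Type*} [DecidableEq P] (e : Phat P × Phat P) : P → ℝ :=
  chiHatR e.1 - chiHatR e.2

/-- The set of edges (covering pairs) of `P̂`. -/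
def edgeSet (P : Type*) [PartialOrder P] : Set (Phat P × Phat P) :=
  {e | e.1 ⋖ e.2}

/-- Membership of `a ∈ P̂` in `{0̂} ∪ τ` for a subset `τ ⊆ P`. -/
def memHat {P : Type*} (τ : Set P) (a : Phat P) : Prop :=
  a = ⊥ ∨ ∃ u ∈ τ, a = toHat u

/-- For an order ideal `τ`, the set `E(τ) = {e ∈ E : t(e) ∈ {0̂} ∪ τ, s(e) ∉ {0̂} ∪ τ}`. -/
def edgeCut {P : Type*} [PartialOrder P] (τ : Set P) : Set (Phat P × Phat P) :=
  {e ∈ edgeSet P | memHat τ e.1 ∧ ¬ memHat τ e.2}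

/-- A finite poset is pure if all of its maximal chains have the same cardinality. -/
def IsPurePoset (P : Type*) [PartialOrder P] : Prop :=
  ∀ C₁ C₂ : Set P, IsMaxChain (· ≤ ·) C₁ → IsMaxChain (· ≤ ·) C₂ →
    C₁.ncard = C₂.ncard

lemma toHat_inj {P : Type*} {u v : P} (h : toHat u = toHat v) : u = v := by
  simpa [toHat] using h

lemma toHat_ne_bot {P : Type*} (u : P) : toHat u ≠ (⊥ : Phat P) := by simp [toHat]

lemma toHat_ne_top {P : Type*} (u : P) :
    toHat u ≠ (((⊤ : WithTop P) : Phat P)) := by simp [toHat]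

lemma phat_cases {P : Type*} (a : Phat P) :
    a = ⊥ ∨ a = ((⊤ : WithTop P) : Phat P) ∨ ∃ u : P, a = toHat u := by
  induction a using WithBot.recBotCoe with
  | bot => exact Or.inl rfl
  | coe b =>
    induction b using WithTop.recTopCoe with
    | top => exact Or.inr (Or.inl rfl)
    | coe v => exact Or.inr (Or.inr ⟨v, rfl⟩)

lemma le_hat_top {P : Type*} [PartialOrder P] (a : Phat P) :
    a ≤ ((⊤ : WithTop P) : Phat P) := by
  induction a using WithBot.recBotCoe with
  | bot => exact bot_le
  | coe b => exact WithBot.coe_le_coe.mpr le_top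

lemma chiHatR_apply {P : Type*} [DecidableEq P] (a : Phat P) (u : P) :
    chiHatR a u = if a = toHat u then 1 else 0 := by
  induction a using WithBot.recBotCoe with
  | bot => simp [chiHatR, toHat]
  | coe b =>
    induction b using WithTop.recTopCoe with
    | top =>
      simp only [chiHatR, WithBot.recBotCoe_coe, WithTop.recTopCoe_top, Pi.zero_apply]
      rw [if_neg (fun h => toHat_ne_top u h.symm)]
    | coe v =>
      simp only [chiHatR, WithBot.recBotCoe_coe, WithTop.recTopCoe_coe, toHat]
      rw [Pi.single_apply]
      by_cases h : v = u
      · subst h; simp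
      · rw [if_neg (Ne.symm h)]; exact (if_neg (by simpa using h)).symm

lemma memHat_toHat {P : Type*} (τ : Set P) (u : P) : memHat τ (toHat u) ↔ u ∈ τ := by
  constructor
  · rintro (h | ⟨v, hv, h⟩)
    · exact absurd h (toHat_ne_bot u)
    · rwa [toHat_inj h]
  · exact fun h => Or.inr ⟨u, h, rfl⟩

lemma memHat_bot {P : Type*} (τ : Set P) : memHat τ (⊥ : Phat P) := Or.inl rfl

lemma not_memHat_top {P : Type*} (τ : Set P) :
    ¬ memHat τ (((⊤ : WithTop P) : Phat P)) := by
  rintro (h | ⟨v, hv, h⟩)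
  · exact WithBot.coe_ne_bot h
  · exact toHat_ne_top v h.symm

lemma pin_support {ι : Type*} (t : Finset ι) (w : ι → ℝ) (p : ι → Prop) [DecidablePred p]
    (hw0 : ∀ i ∈ t, 0 ≤ w i) (hw1 : ∑ i ∈ t, w i = 1)
    (h : ∑ i ∈ t, (if p i then w i else 0) = 1) :
    ∀ i ∈ t, w i ≠ 0 → p i := by
  intro i hi hwi
  by_contra hp
  have hz : ∑ j ∈ t, (w j - if p j then w j else 0) = 0 := by
    rw [Finset.sum_sub_distrib, hw1, h]; ring
  have hnn : ∀ j ∈ t, 0 ≤ w j - if p j then w j else 0 := by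
    intro j hj
    split_ifs with hpj
    · simp
    · simpa using hw0 j hj
  have hterm := (Finset.sum_eq_zero_iff_of_nonneg hnn).mp hz i hi
  rw [if_neg hp] at hterm
  exact hwi (by linarith)

/-- For a finite pure poset `P` and an order ideal `τ`, the only lattice points of the
convex hull of `δ(E ∖ E(τ)) ⊆ ℝ^P` are the points `δ(e)` themselves — the
combinatorial form of the terminality of the singularities of `ℙ_{Δ(P)}`. -/
theorem latticePoints_convexHull_delta (P : Type*) [PartialOrder P] [Fintype P]
    [DecidableEq P] (hpure : IsPurePoset P) (τ : Set P) (hτ : IsLowerSet τ) :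
    {x : P → ℝ |
        x ∈ convexHull ℝ (deltaVecR '' (edgeSet P \ edgeCut τ)) ∧
          ∀ u : P, ∃ k : ℤ, x u = k}
      = deltaVecR '' (edgeSet P \ edgeCut τ) := by
  classical
  ext x
  simp only [Set.mem_setOf_eq]
  constructor
  · rintro ⟨hx, hint⟩
    rw [convexHull_eq] at hx
    obtain ⟨ι, t, w, z, hw0, hw1, hz, hcm⟩ := hx
    have hx_eq : x = ∑ i ∈ t, w i • z i := by
      rw [← hcm, Finset.centerMass_eq_of_sum_1 _ _ hw1]
    have hch : ∀ i, ∃ ed : Phat P × Phat P,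
        i ∈ t → ed ∈ edgeSet P \ edgeCut τ ∧ deltaVecR ed = z i := by
      intro i
      by_cases hi : i ∈ t
      · obtain ⟨ed, hed, hde⟩ := hz i hi
        exact ⟨ed, fun _ => ⟨hed, hde⟩⟩
      · exact ⟨(⊥, ⊥), fun h => absurd h hi⟩
    choose e he using hch
    have hcov : ∀ i ∈ t, (e i).1 ⋖ (e i).2 := fun i hi => (he i hi).1.1
    -- coordinates of x
    have hxu' : ∀ u : P, x u = ∑ i ∈ t, w i * deltaVecR (e i) u := by
      intro u
      rw [hx_eq, Finset.sum_apply]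
      exact Finset.sum_congr rfl fun i hi => by
        rw [Pi.smul_apply, smul_eq_mul, (he i hi).2]
    set Wt : Phat P → ℝ := fun a => ∑ i ∈ t, if (e i).1 = a then w i else 0 with hWtdef
    set Ws : Phat P → ℝ := fun a => ∑ i ∈ t, if (e i).2 = a then w i else 0 with hWsdef
    have hxu : ∀ u : P, x u = Wt (toHat u) - Ws (toHat u) := by
      intro u
      rw [hxu', hWtdef, hWsdef]
      simp only
      rw [← Finset.sum_sub_distrib]
      refine Finset.sum_congr rfl fun i hi => ?_
      simp only [deltaVecR, Pi.sub_apply, chiHatR_apply]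
      split_ifs <;> ring
    have hWt0 : ∀ a, 0 ≤ Wt a := fun a => Finset.sum_nonneg fun i hi => by
      split_ifs
      · exact hw0 i hi
      · exact le_refl 0
    have hWs0 : ∀ a, 0 ≤ Ws a := fun a => Finset.sum_nonneg fun i hi => by
      split_ifs
      · exact hw0 i hi
      · exact le_refl 0
    have hWt1 : ∀ a, Wt a ≤ 1 := fun a => by
      rw [← hw1]
      refine Finset.sum_le_sum fun i hi => ?_
      split_ifs
      · exact le_refl _
      · exact hw0 i hi
    have hWs1 : ∀ a, Ws a ≤ 1 := fun a => by
      rw [← hw1]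
      refine Finset.sum_le_sum fun i hi => ?_
      split_ifs
      · exact le_refl _
      · exact hw0 i hi
    have htri : ∀ u : P, x u = -1 ∨ x u = 0 ∨ x u = 1 := by
      intro u
      obtain ⟨k, hk⟩ := hint u
      have h1 : x u ≤ 1 := by
        rw [hxu u]; have := hWt1 (toHat u); have := hWs0 (toHat u); linarith
      have h2 : -1 ≤ x u := by
        rw [hxu u]; have := hWt0 (toHat u); have := hWs1 (toHat u); linarith
      rw [hk] at h1 h2 ⊢
      have hk1 : k ≤ 1 := by exact_mod_cast h1
      have hk2 : -1 ≤ k := by exact_mod_cast h2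
      have : k = -1 ∨ k = 0 ∨ k = 1 := by omega
      rcases this with h | h | h <;> rw [h] <;> norm_num
    have hsupp : ∃ i₀ ∈ t, w i₀ ≠ 0 := by
      by_contra h
      push_neg at h
      rw [Finset.sum_eq_zero h] at hw1
      norm_num at hw1
    obtain ⟨i₀, hi₀, hwi₀⟩ := hsupp
    -- single weight lower bounds
    have hsingleWt : ∀ i ∈ t, w i ≤ Wt ((e i).1) := by
      intro i hi
      rw [hWtdef]
      simp only
      have h := Finset.single_le_sum
        (f := fun j => if (e j).1 = (e i).1 then w j else 0)
        (fun j hj => by split_ifs; exacts [hw0 j hj, le_refl 0]) hi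
      simpa using h
    have hsingleWs : ∀ i ∈ t, w i ≤ Ws ((e i).2) := by
      intro i hi
      rw [hWsdef]
      simp only
      have h := Finset.single_le_sum
        (f := fun j => if (e j).2 = (e i).2 then w j else 0)
        (fun j hj => by split_ifs; exacts [hw0 j hj, le_refl 0]) hi
      simpa using h
    have hplus : ∀ a : P, x a = 1 → Wt (toHat a) = 1 := by
      intro a ha
      have h := hxu a; rw [ha] at h
      have h1 := hWt1 (toHat a); have h2 := hWs0 (toHat a)
      linarith
    have hminus : ∀ b : P, x b = -1 → Ws (toHat b) = 1 := by
      intro b hb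
      have h := hxu b; rw [hb] at h
      have h1 := hWs1 (toHat b); have h2 := hWt0 (toHat b)
      linarith
    have pin1 : ∀ a : Phat P, Wt a = 1 → ∀ i ∈ t, w i ≠ 0 → (e i).1 = a :=
      fun a ha => pin_support t w (fun i => (e i).1 = a) hw0 hw1 ha
    have pin2 : ∀ a : Phat P, Ws a = 1 → ∀ i ∈ t, w i ≠ 0 → (e i).2 = a :=
      fun a ha => pin_support t w (fun i => (e i).2 = a) hw0 hw1 ha
    have hfinish : ∀ e₀ ∈ edgeSet P \ edgeCut τ,
        (∀ i ∈ t, w i ≠ 0 → e i = e₀) → x ∈ deltaVecR '' (edgeSet P \ edgeCut τ) := by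
      intro e₀ he₀ hall
      refine ⟨e₀, he₀, ?_⟩
      have hxe : x = ∑ i ∈ t, w i • deltaVecR e₀ := by
        rw [hx_eq]
        refine Finset.sum_congr rfl fun i hi => ?_
        by_cases hwi : w i = 0
        · rw [hwi, zero_smul, zero_smul]
        · rw [← (he i hi).2, hall i hi hwi]
      rw [hxe, ← Finset.sum_smul, hw1, one_smul]
    by_cases hA : ∃ a : P, x a = 1
    · obtain ⟨a, ha⟩ := hA
      have hp1 : ∀ i ∈ t, w i ≠ 0 → (e i).1 = toHat a := pin1 _ (hplus a ha)
      by_cases hc : ∃ i ∈ t, w i ≠ 0 ∧ ∃ b : P, (e i).2 = toHat b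
      · obtain ⟨i₁, hi₁, hwi₁, b, hb⟩ := hc
        have hne : toHat a ≠ toHat b := by
          rw [← hp1 i₁ hi₁ hwi₁, ← hb]
          exact (hcov i₁ hi₁).ne
        have hWtb : Wt (toHat b) = 0 := by
          apply Finset.sum_eq_zero
          intro i hi
          by_cases hwi : w i = 0
          · split_ifs <;> simp [hwi]
          · rw [if_neg (by rw [hp1 i hi hwi]; exact hne)]
        have hWsb : w i₁ ≤ Ws (toHat b) := by
          have := hsingleWs i₁ hi₁
          rwa [hb] at this
        have hxb : x b = -1 := by
          have hlt : x b < 0 := by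
            rw [hxu b, hWtb]
            have hw : 0 < w i₁ := lt_of_le_of_ne (hw0 i₁ hi₁) (Ne.symm hwi₁)
            linarith
          rcases htri b with h | h | h
          · exact h
          · exfalso; rw [h] at hlt; norm_num at hlt
          · exfalso; rw [h] at hlt; norm_num at hlt
        have hp2 : ∀ i ∈ t, w i ≠ 0 → (e i).2 = toHat b := pin2 _ (hminus b hxb)
        have hall : ∀ i ∈ t, w i ≠ 0 → e i = (toHat a, toHat b) :=
          fun i hi hwi => Prod.ext (hp1 i hi hwi) (hp2 i hi hwi)
        have he₀ : (toHat a, toHat b) ∈ edgeSet P \ edgeCut τ := by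
          rw [← hall i₁ hi₁ hwi₁]; exact (he i₁ hi₁).1
        exact hfinish _ he₀ hall
      · push_neg at hc
        have hall : ∀ i ∈ t, w i ≠ 0 → e i = (toHat a, ((⊤ : WithTop P) : Phat P)) := by
          intro i hi hwi
          refine Prod.ext (hp1 i hi hwi) ?_
          rcases phat_cases (e i).2 with h | h | ⟨v, h⟩
          · exfalso
            have hlt := (hcov i hi).lt
            rw [h] at hlt
            exact not_lt_bot hlt
          · exact h
          · exact absurd h (hc i hi hwi v)
        have he₀ : (toHat a, ((⊤ : WithTop P) : Phat P)) ∈ edgeSet P \ edgeCut τ := by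
          rw [← hall i₀ hi₀ hwi₀]; exact (he i₀ hi₀).1
        exact hfinish _ he₀ hall
    · by_cases hB : ∃ b : P, x b = -1
      · obtain ⟨b, hb⟩ := hB
        have hp2 : ∀ i ∈ t, w i ≠ 0 → (e i).2 = toHat b := pin2 _ (hminus b hb)
        have hall : ∀ i ∈ t, w i ≠ 0 → e i = ((⊥ : Phat P), toHat b) := by
          intro i hi hwi
          refine Prod.ext ?_ (hp2 i hi hwi)
          rcases phat_cases (e i).1 with h | h | ⟨v, h⟩
          · exact h
          · exfalso
            have hlt := (hcov i hi).lt
            rw [h, hp2 i hi hwi] at hlt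
            exact hlt.not_ge (le_hat_top (toHat b))
          · exfalso
            apply hA
            refine ⟨v, ?_⟩
            have hnevb : toHat v ≠ toHat b := by
              rw [← h, ← hp2 i hi hwi]
              exact (hcov i hi).ne
            have hWsv : Ws (toHat v) = 0 := by
              apply Finset.sum_eq_zero
              intro j hj
              by_cases hwj : w j = 0
              · split_ifs <;> simp [hwj]
              · rw [if_neg (by rw [hp2 j hj hwj]; exact fun hh => hnevb hh.symm)]
            have hWtv : w i ≤ Wt (toHat v) := by
              have := hsingleWt i hi
              rwa [h] at this
            have hpos : 0 < x v := by
              rw [hxu v, hWsv]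
              have hw : 0 < w i := lt_of_le_of_ne (hw0 i hi) (Ne.symm hwi)
              linarith
            rcases htri v with hh | hh | hh
            · exfalso; rw [hh] at hpos; norm_num at hpos
            · exfalso; rw [hh] at hpos; norm_num at hpos
            · exact hh
        have he₀ : ((⊥ : Phat P), toHat b) ∈ edgeSet P \ edgeCut τ := by
          rw [← hall i₀ hi₀ hwi₀]; exact (he i₀ hi₀).1
        exact hfinish _ he₀ hall
      · -- x = 0: contradiction via a strictly monotone functional
        exfalso
        push_neg at hA hB
        have hx0 : ∀ u : P, x u = 0 := by
          intro u
          rcases htri u with h | h | h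
          · exact absurd h (hB u)
          · exact h
          · exact absurd h (hA u)
        set N : ℝ := (Fintype.card P : ℝ) + 1 with hN
        set c : P → ℝ := fun u =>
          ((Finset.univ.filter (fun v => v ≤ u)).card : ℝ) - (if u ∈ τ then 0 else N)
          with hcdef
        have hcard_lt : ∀ {u v : P}, u < v →
            ((Finset.univ.filter (fun w => w ≤ u)).card : ℝ)
              < ((Finset.univ.filter (fun w => w ≤ v)).card : ℝ) := by
          intro u v huv
          have hsub : Finset.univ.filter (fun w => w ≤ u) ⊆
              Finset.univ.filter (fun w => w ≤ v) := by
            intro a ha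
            simp only [Finset.mem_filter, Finset.mem_univ, true_and] at ha ⊢
            exact ha.trans huv.le
          have : Finset.univ.filter (fun w => w ≤ u) ⊂ Finset.univ.filter (fun w => w ≤ v) := by
            refine (Finset.ssubset_iff_of_subset hsub).mpr ⟨v, ?_, ?_⟩
            · simp
            · simp only [Finset.mem_filter, Finset.mem_univ, true_and]
              exact fun h => lt_irrefl u (lt_of_lt_of_le huv h)
          exact_mod_cast Finset.card_lt_card this
        have hcard_ge1 : ∀ u : P, (1 : ℝ) ≤ ((Finset.univ.filter (fun w => w ≤ u)).card : ℝ) := by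
          intro u
          have : 0 < (Finset.univ.filter (fun w => w ≤ u)).card :=
            Finset.card_pos.mpr ⟨u, by simp⟩
          exact_mod_cast this
        have hcard_le : ∀ u : P,
            ((Finset.univ.filter (fun w => w ≤ u)).card : ℝ) ≤ (Fintype.card P : ℝ) := by
          intro u
          exact_mod_cast Finset.card_filter_le _ _
        set g : Phat P → ℝ := fun a => ∑ u : P, (if a = toHat u then c u else 0) with hgdef
        have hg_bot : g ⊥ = 0 :=
          Finset.sum_eq_zero fun u _ => if_neg (Ne.symm (toHat_ne_bot u))
        have hg_top : g (((⊤ : WithTop P) : Phat P)) = 0 :=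
          Finset.sum_eq_zero fun u _ => if_neg (fun h => toHat_ne_top u h.symm)
        have hg_coe : ∀ v : P, g (toHat v) = c v := by
          intro v
          rw [hgdef]
          simp only
          rw [Finset.sum_eq_single v]
          · rw [if_pos rfl]
          · intro u _ huv
            exact if_neg (fun h => huv (toHat_inj h).symm)
          · intro h; exact absurd (Finset.mem_univ v) h
        have hkey : ∀ ed ∈ edgeSet P \ edgeCut τ, g ed.1 < g ed.2 := by
          rintro ⟨a, b⟩ ⟨hcv, hcut⟩
          have hcv : a ⋖ b := hcv
          have himp : memHat τ a → memHat τ b := by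
            intro hma
            by_contra hmb
            exact hcut ⟨hcv, hma, hmb⟩
          rcases phat_cases a with ha | ha | ⟨ua, ha⟩ <;> subst ha
          · rcases phat_cases b with hb | hb | ⟨ub, hb⟩ <;> subst hb
            · exact absurd hcv.lt (lt_irrefl _)
            · exact absurd (himp (memHat_bot τ)) (not_memHat_top τ)
            · have hub : ub ∈ τ := (memHat_toHat τ ub).mp (himp (memHat_bot τ))
              rw [hg_bot, hg_coe, hcdef]
              simp only [if_pos hub]
              have := hcard_ge1 ub
              linarith
          · exact absurd (le_hat_top _) hcv.lt.not_ge
          · rcases phat_cases b with hb | hb | ⟨ub, hb⟩ <;> subst hb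
            · exact absurd hcv.lt (not_lt_bot)
            · have hua : ua ∉ τ := by
                intro h
                exact not_memHat_top τ (himp ((memHat_toHat τ ua).mpr h))
              rw [hg_top, hg_coe, hcdef]
              simp only [if_neg hua]
              have := hcard_le ua
              rw [hN]
              linarith
            · have hlt : ua < ub := by
                have := hcv.lt
                simpa [toHat] using this
              rw [hg_coe, hg_coe, hcdef]
              simp only
              by_cases hua : ua ∈ τ
              · have hub : ub ∈ τ := (memHat_toHat τ ub).mp
                  (himp ((memHat_toHat τ ua).mpr hua))
                rw [if_pos hua, if_pos hub]
                have := hcard_lt hlt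
                linarith
              · have hub : ub ∉ τ := fun h => hua (hτ hlt.le h)
                rw [if_neg hua, if_neg hub]
                have := hcard_lt hlt
                linarith
        have hFx0 : ∑ u : P, c u * x u = 0 :=
          Finset.sum_eq_zero fun u _ => by rw [hx0 u, mul_zero]
        have hFx : ∑ u : P, c u * x u = ∑ i ∈ t, w i * (g (e i).1 - g (e i).2) := by
          have h1 : ∀ u : P, c u * x u = ∑ i ∈ t, w i * (c u * deltaVecR (e i) u) := by
            intro u
            rw [hxu' u, Finset.mul_sum]
            exact Finset.sum_congr rfl fun i _ => by ring
          rw [Finset.sum_congr rfl fun u _ => h1 u, Finset.sum_comm]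
          refine Finset.sum_congr rfl fun i hi => ?_
          rw [← Finset.mul_sum]
          congr 1
          have : ∀ u : P, c u * deltaVecR (e i) u =
              (if (e i).1 = toHat u then c u else 0) - (if (e i).2 = toHat u then c u else 0) := by
            intro u
            simp only [deltaVecR, Pi.sub_apply, chiHatR_apply]
            split_ifs <;> ring
          rw [Finset.sum_congr rfl fun u _ => this u, Finset.sum_sub_distrib]
        have hneg : ∑ i ∈ t, w i * (g (e i).1 - g (e i).2) < 0 := by
          have hlt : ∑ i ∈ t, w i * (g (e i).1 - g (e i).2) < ∑ i ∈ t, (0 : ℝ) := by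
            refine Finset.sum_lt_sum (fun i hi => ?_) ⟨i₀, hi₀, ?_⟩
            · exact mul_nonpos_iff.mpr
                (Or.inl ⟨hw0 i hi, sub_nonpos.mpr (hkey (e i) ((he i hi).1)).le⟩)
            · exact mul_neg_of_pos_of_neg (lt_of_le_of_ne (hw0 i₀ hi₀) (Ne.symm hwi₀))
                (sub_neg.mpr (hkey (e i₀) ((he i₀ hi₀).1)))
          simpa using hlt
        rw [hFx] at hFx0
        linarith
  · rintro ⟨ed, hed, rfl⟩
    refine ⟨subset_convexHull ℝ _ ⟨ed, hed, rfl⟩, ?_⟩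
    intro u
    refine ⟨(if ed.1 = toHat u then 1 else 0) - (if ed.2 = toHat u then 1 else 0), ?_⟩
    simp only [deltaVecR, Pi.sub_apply, chiHatR_apply]
    push_cast
    split_ifs <;> norm_num
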